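/- For every finite simple graph G, |nucleus(G)| + |diadem(G)| ≤ 2·α(G). -/

import Mathlib

variable {V : Type*} [Fintype V] [DecidableEq V]

/-- `S` is an independent set of `G`. -/
def IsIndep (G : SimpleGraph V) (S : Set V) : Prop :=
  ∀ ⦃u⦄, u ∈ S → ∀ ⦃v⦄, v ∈ S → ¬ G.Adj u v

/-- The independence number `α(G)`: the maximum cardinality of an independent set. -/
noncomputable def indepNum (G : SimpleGraph V) : ℕ :=
  sSup {n : ℕ | ∃ S : Set V, IsIndep G S ∧ S.ncard = n}

/-- `S` is a maximum independent set of `G`. -/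
def IsMaxIndep (G : SimpleGraph V) (S : Set V) : Prop :=
  IsIndep G S ∧ ∀ T : Set V, IsIndep G T → T.ncard ≤ S.ncard

/-- The neighborhood `N(X)` of a set of vertices `X`. -/
def nbhdSet (G : SimpleGraph V) (X : Set V) : Set V :=
  {v | ∃ u ∈ X, G.Adj u v}

/-- The difference `d_G(X) = |X| - |N(X)|` of a vertex set `X`. -/
noncomputable def diffSet (G : SimpleGraph V) (X : Set V) : ℤ :=
  (X.ncard : ℤ) - ((nbhdSet G X).ncard : ℤ)

/-- `I` is a critical independent set of `G`. -/
def IsCriticalIndep (G : SimpleGraph V) (I : Set V) : Prop :=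
  IsIndep G I ∧ ∀ J : Set V, IsIndep G J → diffSet G J ≤ diffSet G I

/-- `I` is a maximum-cardinality critical independent set of `G`. -/
def IsMaxCriticalIndep (G : SimpleGraph V) (I : Set V) : Prop :=
  IsCriticalIndep G I ∧ ∀ J : Set V, IsCriticalIndep G J → J.ncard ≤ I.ncard

/-- `core(G)`: the intersection of all maximum independent sets of `G`. -/
def coreSet (G : SimpleGraph V) : Set V := ⋂₀ {S : Set V | IsMaxIndep G S}

/-- `corona(G)`: the union of all maximum independent sets of `G`. -/
def coronaSet (G : SimpleGraph V) : Set V := ⋃₀ {S : Set V | IsMaxIndep G S}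

/-- `ker(G)`: the intersection of all critical independent sets of `G`. -/
def kerSet (G : SimpleGraph V) : Set V := ⋂₀ {S : Set V | IsCriticalIndep G S}

/-- `diadem(G)`: the union of all critical independent sets of `G`. -/
def diademSet (G : SimpleGraph V) : Set V := ⋃₀ {S : Set V | IsCriticalIndep G S}

/-- `nucleus(G)`: the intersection of all maximum-cardinality critical independent
sets of `G`. -/
def nucleusSet (G : SimpleGraph V) : Set V := ⋂₀ {S : Set V | IsMaxCriticalIndep G S}

/-- `C` is the vertex set of some odd cycle of `G`. -/
def IsOddCycleVertexSet (G : SimpleGraph V) (C : Set V) : Prop :=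
  ∃ (v : V) (w : G.Walk v v), w.IsCycle ∧ Odd w.length ∧ {x | x ∈ w.support} = C

/-- The maximum cardinality of a set of pairwise vertex-distinct odd cycles of `G`,
i.e. the number of distinct vertex sets of odd cycles of `G`. -/
noncomputable def numVertexDistinctOddCycles (G : SimpleGraph V) : ℕ :=
  {C : Set V | IsOddCycleVertexSet G C}.ncard

/-- `E` is the edge set of some odd cycle of `G`. -/
def IsOddCycleEdgeSet (G : SimpleGraph V) (E : Set (Sym2 V)) : Prop :=
  ∃ (v : V) (w : G.Walk v v), w.IsCycle ∧ Odd w.length ∧ {e | e ∈ w.edges} = E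

/-- The number of (distinct) odd cycles of `G`, where a cycle is identified with
its edge set. -/
noncomputable def numOddCycles (G : SimpleGraph V) : ℕ :=
  {E : Set (Sym2 V) | IsOddCycleEdgeSet G E}.ncard

set_option linter.unusedSectionVars false

namespace Scratch

variable (G : SimpleGraph V)

lemma nbhd_mono {X Y : Set V} (h : X ⊆ Y) : nbhdSet G X ⊆ nbhdSet G Y := by
  rintro v ⟨u, hu, hadj⟩; exact ⟨u, h hu, hadj⟩

lemma nbhd_union (A B : Set V) : nbhdSet G (A ∪ B) = nbhdSet G A ∪ nbhdSet G B := by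
  ext v
  constructor
  · rintro ⟨u, hu | hu, hadj⟩
    · exact Or.inl ⟨u, hu, hadj⟩
    · exact Or.inr ⟨u, hu, hadj⟩
  · rintro (⟨u, hu, hadj⟩ | ⟨u, hu, hadj⟩)
    · exact ⟨u, Or.inl hu, hadj⟩
    · exact ⟨u, Or.inr hu, hadj⟩

lemma nbhd_inter_subset (A B : Set V) :
    nbhdSet G (A ∩ B) ⊆ nbhdSet G A ∩ nbhdSet G B := by
  rintro v ⟨u, ⟨h1, h2⟩, hadj⟩; exact ⟨⟨u, h1, hadj⟩, ⟨u, h2, hadj⟩⟩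

lemma supermod (A B : Set V) :
    diffSet G A + diffSet G B ≤ diffSet G (A ∪ B) + diffSet G (A ∩ B) := by
  have h1 : (A ∪ B).ncard + (A ∩ B).ncard = A.ncard + B.ncard :=
    Set.ncard_union_add_ncard_inter A B (Set.toFinite A) (Set.toFinite B)
  have h2 : (nbhdSet G A ∪ nbhdSet G B).ncard + (nbhdSet G A ∩ nbhdSet G B).ncard
      = (nbhdSet G A).ncard + (nbhdSet G B).ncard :=
    Set.ncard_union_add_ncard_inter _ _ (Set.toFinite _) (Set.toFinite _)
  have h3 : (nbhdSet G (A ∩ B)).ncard ≤ (nbhdSet G A ∩ nbhdSet G B).ncard :=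
    Set.ncard_le_ncard (nbhd_inter_subset G A B) (Set.toFinite _)
  have h4 : (nbhdSet G (A ∪ B)).ncard = (nbhdSet G A ∪ nbhdSet G B).ncard := by
    rw [nbhd_union]
  unfold diffSet
  rw [h4]
  push_cast at h1 h2 h3 ⊢
  linarith

/-- Reduction of any set to an independent one without decreasing `d`. -/
lemma drop_indep (X : Set V) : IsIndep G (X \ nbhdSet G X) := by
  intro u hu v hv hadj
  exact hv.2 ⟨u, hu.1, hadj⟩

lemma drop_diff_le (X : Set V) : diffSet G X ≤ diffSet G (X \ nbhdSet G X) := by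
  set Y := X \ nbhdSet G X with hY
  have hYX : Y ⊆ X := Set.diff_subset
  have hNY : nbhdSet G Y ⊆ nbhdSet G X \ (X ∩ nbhdSet G X) := by
    intro v hv
    obtain ⟨u, hu, hadj⟩ := hv
    refine ⟨⟨u, hYX hu, hadj⟩, ?_⟩
    rintro ⟨hvX, -⟩
    exact hu.2 ⟨v, hvX, hadj.symm⟩
  have hc1 : Y.ncard = X.ncard - (X ∩ nbhdSet G X).ncard := by
    rw [hY]
    rw [← Set.diff_self_inter]
    exact Set.ncard_diff (s := X ∩ nbhdSet G X) (t := X) Set.inter_subset_left (Set.toFinite _)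
  have hc2 : (nbhdSet G Y).ncard ≤ (nbhdSet G X).ncard - (X ∩ nbhdSet G X).ncard := by
    calc (nbhdSet G Y).ncard ≤ (nbhdSet G X \ (X ∩ nbhdSet G X)).ncard :=
          Set.ncard_le_ncard hNY (Set.toFinite _)
      _ = (nbhdSet G X).ncard - (X ∩ nbhdSet G X).ncard :=
          Set.ncard_diff (s := X ∩ nbhdSet G X) (t := nbhdSet G X) Set.inter_subset_right (Set.toFinite _)
  have hle : (X ∩ nbhdSet G X).ncard ≤ X.ncard :=
    Set.ncard_le_ncard (Set.inter_subset_left) (Set.toFinite _)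
  have hle2 : (X ∩ nbhdSet G X).ncard ≤ (nbhdSet G X).ncard :=
    Set.ncard_le_ncard (Set.inter_subset_right) (Set.toFinite _)
  unfold diffSet
  rw [hc1]
  have := hc2
  omega

/-- Any set has diff at most that of a critical independent set. -/
lemma diff_le_crit {I : Set V} (hI : IsCriticalIndep G I) (X : Set V) :
    diffSet G X ≤ diffSet G I :=
  le_trans (drop_diff_le G X) (hI.2 _ (drop_indep G X))

lemma crit_inter {I J : Set V} (hI : IsCriticalIndep G I) (hJ : IsCriticalIndep G J) :
    IsCriticalIndep G (I ∩ J) ∧ diffSet G (I ∪ J) = diffSet G I := by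
  have hIJ : diffSet G J = diffSet G I :=
    le_antisymm (hI.2 _ hJ.1) (hJ.2 _ hI.1)
  have h1 := supermod G I J
  have h2 := diff_le_crit G hI (I ∪ J)
  have h3 := diff_le_crit G hI (I ∩ J)
  have hint : diffSet G (I ∩ J) = diffSet G I := by linarith
  have hun : diffSet G (I ∪ J) = diffSet G I := by linarith
  refine ⟨⟨fun u hu v hv hadj => hI.1 hu.1 hv.1 hadj, fun K hK => ?_⟩, hun⟩
  rw [hint]; exact hI.2 K hK

/-- Existence of a maximum critical independent set. -/
lemma exists_max_crit : ∃ I : Set V, IsMaxCriticalIndep G I := by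
  classical
  -- first, a critical independent set exists
  have h1 : ∃ I : Set V, IsCriticalIndep G I := by
    obtain ⟨I, hImem, hImax⟩ := Set.exists_max_image {S : Set V | IsIndep G S}
      (fun S => diffSet G S) (Set.toFinite _) ⟨∅, fun u hu => absurd hu (Set.notMem_empty u)⟩
    exact ⟨I, hImem, fun J hJ => hImax J hJ⟩
  obtain ⟨I₀, hI₀⟩ := h1
  obtain ⟨I, hImem, hImax⟩ := Set.exists_max_image {S : Set V | IsCriticalIndep G S}
    (fun S => (S.ncard : ℤ)) (Set.toFinite _) ⟨I₀, hI₀⟩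
  refine ⟨I, hImem, fun J hJ => ?_⟩
  exact_mod_cast hImax J hJ

end Scratch

namespace Scratch2
open Scratch

variable (G : SimpleGraph V)

/-- Hall condition from criticality: for `T ⊆ N(I)`, `|T| ≤ |N(T) ∩ I|`. -/
lemma hall_cond {I : Set V} (hI : IsCriticalIndep G I) {T : Set V}
    (hT : T ⊆ nbhdSet G I) : T.ncard ≤ (nbhdSet G T ∩ I).ncard := by
  set I' := I \ nbhdSet G T with hI'
  have hind : IsIndep G I' := fun u hu v hv hadj => hI.1 hu.1 hv.1 hadj
  have hle := hI.2 I' hind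
  have hNI' : nbhdSet G I' ⊆ nbhdSet G I \ T := by
    intro v hv
    obtain ⟨u, hu, hadj⟩ := hv
    refine ⟨⟨u, hu.1, hadj⟩, fun hvT => hu.2 ⟨v, hvT, hadj.symm⟩⟩
  have hc1 : I'.ncard = I.ncard - (I ∩ nbhdSet G T).ncard := by
    rw [hI', ← Set.diff_self_inter]
    exact Set.ncard_diff (s := I ∩ nbhdSet G T) (t := I) Set.inter_subset_left (Set.toFinite _)
  have hc2 : (nbhdSet G I').ncard ≤ (nbhdSet G I).ncard - T.ncard := by
    calc (nbhdSet G I').ncard ≤ (nbhdSet G I \ T).ncard :=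
          Set.ncard_le_ncard hNI' (Set.toFinite _)
      _ = (nbhdSet G I).ncard - T.ncard :=
          Set.ncard_diff (s := T) (t := nbhdSet G I) hT (Set.toFinite _)
  have h0 : (I ∩ nbhdSet G T).ncard ≤ I.ncard :=
    Set.ncard_le_ncard Set.inter_subset_left (Set.toFinite _)
  have h1 : T.ncard ≤ (nbhdSet G I).ncard := Set.ncard_le_ncard hT (Set.toFinite _)
  have heq : (nbhdSet G T ∩ I).ncard = (I ∩ nbhdSet G T).ncard := by rw [Set.inter_comm]
  unfold diffSet at hle
  rw [hc1] at hle
  omega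

/-- A Hall matching of `N(I)` into `I` for a critical independent set. -/
lemma exists_matching {I : Set V} (hI : IsCriticalIndep G I) :
    ∃ ν : V → V, Set.InjOn ν (nbhdSet G I) ∧
      ∀ v ∈ nbhdSet G I, ν v ∈ I ∧ G.Adj v (ν v) := by
  classical
  haveI : Fintype ↥(nbhdSet G I) := Fintype.ofFinite _
  set t : ↥(nbhdSet G I) → Finset V :=
    fun v => Finset.univ.filter (fun x => x ∈ I ∧ G.Adj (v : V) x) with ht
  have hcond : ∀ A : Finset ↥(nbhdSet G I), A.card ≤ (A.biUnion t).card := by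
    intro A
    set T : Set V := Subtype.val '' (↑A : Set ↥(nbhdSet G I)) with hT
    have hTsub : T ⊆ nbhdSet G I := by rintro v ⟨⟨u, hu⟩, -, rfl⟩; exact hu
    have hTcard : T.ncard = A.card := by
      rw [hT, Set.ncard_image_of_injective _ Subtype.val_injective]
      simp [Set.ncard_coe_finset]
    have hset : (↑(A.biUnion t) : Set V) = nbhdSet G T ∩ I := by
      ext x
      simp only [Finset.coe_biUnion, Finset.mem_coe, ht, Finset.mem_filter, Finset.mem_univ,
        true_and, Set.mem_iUnion, Set.mem_inter_iff]
      constructor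
      · rintro ⟨v, hvA, hxI, hadj⟩
        exact ⟨⟨(v : V), ⟨v, hvA, rfl⟩, hadj⟩, hxI⟩
      · rintro ⟨⟨u, ⟨v, hvA, rfl⟩, hadj⟩, hxI⟩
        exact ⟨v, hvA, hxI, hadj⟩
    have := hall_cond G hI hTsub
    rw [hTcard] at this
    calc A.card ≤ (nbhdSet G T ∩ I).ncard := this
      _ = (↑(A.biUnion t) : Set V).ncard := by rw [hset]
      _ = (A.biUnion t).card := Set.ncard_coe_finset _
  obtain ⟨f, hfinj, hfmem⟩ :=
    (Finset.all_card_le_biUnion_card_iff_existsInjective' t).mp hcond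
  refine ⟨fun v => if h : v ∈ nbhdSet G I then f ⟨v, h⟩ else v, ?_, ?_⟩
  · intro u hu v hv heq
    simp only [dif_pos hu, dif_pos hv] at heq
    have := hfinj heq
    exact congrArg Subtype.val this
  · intro v hv
    simp only [dif_pos hv]
    have := hfmem ⟨v, hv⟩
    rw [ht] at this
    simp only [Finset.mem_filter, Finset.mem_univ, true_and] at this
    exact this

end Scratch2

namespace Scratch3
open Scratch Scratch2

variable (G : SimpleGraph V)

lemma subset_union_of_ncard_le {A B : Set V} (h : (A ∪ B).ncard ≤ A.ncard) : B ⊆ A := by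
  have : A ∪ B = A := (Set.eq_of_subset_of_ncard_le Set.subset_union_left h (Set.toFinite _)).symm
  rw [← this]; exact Set.subset_union_right

lemma crit_subset_closed_nbhd {I J : Set V} (hI : IsMaxCriticalIndep G I)
    (hJ : IsCriticalIndep G J) : J ⊆ I ∪ nbhdSet G I := by
  have hIc := hI.1
  have hU : diffSet G I ≤ diffSet G (I ∪ J) := by
    have h1 := supermod G I J
    have h2 := diff_le_crit G hIc (I ∩ J)
    have h3 : diffSet G J = diffSet G I := le_antisymm (hIc.2 _ hJ.1) (hJ.2 _ hIc.1)
    linarith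
  set M : Set V := (I ∪ J) \ nbhdSet G (I ∪ J) with hM
  have hMind : IsIndep G M := drop_indep G (I ∪ J)
  have hMd : diffSet G I ≤ diffSet G M := le_trans hU (drop_diff_le G (I ∪ J))
  have hMcrit : IsCriticalIndep G M :=
    ⟨hMind, fun K hK => le_trans (hIc.2 K hK) hMd⟩
  -- I ∪ M is independent
  have hIM : IsIndep G (I ∪ M) := by
    rintro u (hu | hu) v (hv | hv) hadj
    · exact hIc.1 hu hv hadj
    · exact hv.2 ⟨u, Or.inl hu, hadj⟩
    · exact hu.2 ⟨v, Or.inl hv, hadj.symm⟩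
    · exact hMind hu hv hadj
  have hIMd : diffSet G I ≤ diffSet G (I ∪ M) := by
    have h1 := supermod G I M
    have h2 := diff_le_crit G hIc (I ∩ M)
    have h3 : diffSet G M = diffSet G I := le_antisymm (diff_le_crit G hIc M) hMd
    linarith
  have hIMcrit : IsCriticalIndep G (I ∪ M) :=
    ⟨hIM, fun K hK => le_trans (hIc.2 K hK) hIMd⟩
  have hMsub : M ⊆ I := subset_union_of_ncard_le (hI.2 _ hIMcrit)
  -- conclude
  intro j hjJ
  by_contra hj
  rw [Set.mem_union] at hj
  push_neg at hj
  obtain ⟨hjI, hjNI⟩ := hj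
  have hjU : j ∈ I ∪ J := Or.inr hjJ
  have hjM : j ∉ M := fun h => hjI (hMsub h)
  have hjN : j ∈ nbhdSet G (I ∪ J) := by
    by_contra h
    exact hjM ⟨hjU, h⟩
  rw [nbhd_union] at hjN
  rcases hjN with h | h
  · exact hjNI h
  · obtain ⟨u, hu, hadj⟩ := h
    exact hJ.1 hu hjJ hadj

end Scratch3

namespace Scratch4
open Scratch Scratch2 Scratch3

variable (G : SimpleGraph V)

lemma crit_extends {I J : Set V} (hI : IsMaxCriticalIndep G I)
    (hJ : IsCriticalIndep G J) : ∃ K : Set V, IsMaxCriticalIndep G K ∧ J ⊆ K := by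
  classical
  have hIc := hI.1
  obtain ⟨ν, hνinj, hνmem⟩ := exists_matching G hIc
  obtain ⟨μ, hμinj, hμmem⟩ := exists_matching G hJ
  set T₀ : Set V := I ∩ nbhdSet G J with hT₀
  set S : Set V := (I \ nbhdSet G J) \ J with hS
  set K : Set V := J ∪ S with hK
  have hJNI : J ⊆ I ∪ nbhdSet G I := crit_subset_closed_nbhd G hI hJ
  -- S has no neighbors in J and is inside I
  have hSI : S ⊆ I := fun x hx => hx.1.1
  have hSNJ : ∀ x ∈ S, x ∉ nbhdSet G J := fun x hx => hx.1.2
  -- K is independent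
  have hKind : IsIndep G K := by
    rintro u (hu | hu) v (hv | hv) hadj
    · exact hJ.1 hu hv hadj
    · exact hSNJ v hv ⟨u, hu, hadj⟩
    · exact hSNJ u hu ⟨v, hv, hadj.symm⟩
    · exact hIc.1 (hSI hu) (hSI hv) hadj
  -- the composite map e on T₀
  have hmap : ∀ t ∈ T₀, ν (μ t) ∈ T₀ ∧ μ t ∈ J ∩ nbhdSet G I := by
    intro t ht
    have htNJ : t ∈ nbhdSet G J := ht.2
    obtain ⟨hμJ, hμadj⟩ := hμmem t htNJ
    have hμNI : μ t ∈ nbhdSet G I := ⟨t, ht.1, hμadj⟩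
    obtain ⟨hνI, hνadj⟩ := hνmem (μ t) hμNI
    exact ⟨⟨hνI, ⟨μ t, hμJ, hνadj⟩⟩, ⟨hμJ, hμNI⟩⟩
  haveI : Finite ↥T₀ := Subtype.finite
  set e : ↥T₀ → ↥T₀ := fun t => ⟨ν (μ (t : V)), (hmap t t.2).1⟩ with he
  have heinj : Function.Injective e := by
    intro t t' heq
    have h1 : ν (μ (t : V)) = ν (μ (t' : V)) := congrArg Subtype.val heq
    have h2 : μ (t : V) = μ (t' : V) :=
      hνinj (hmap t t.2).2.2 (hmap t' t'.2).2.2 h1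
    have h3 : (t : V) = (t' : V) := hμinj t.2.2 t'.2.2 h2
    exact Subtype.ext h3
  have hesurj : Function.Surjective e := Finite.surjective_of_injective heinj
  -- W and the key injection into S
  set W : Set V := nbhdSet G S \ nbhdSet G J with hW
  have hWNI : W ⊆ nbhdSet G I := fun w hw => nbhd_mono G hSI hw.1
  have hνW : ∀ w ∈ W, ν w ∈ S := by
    intro w hw
    obtain ⟨hνI, hνadj⟩ := hνmem w (hWNI hw)
    have hνnJ : ν w ∉ J := by
      intro hcon
      exact hw.2 ⟨ν w, hcon, hνadj.symm⟩
    have hνnT₀ : ν w ∉ nbhdSet G J := by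
      intro hcon
      obtain ⟨t', het'⟩ := hesurj ⟨ν w, ⟨hνI, hcon⟩⟩
      have h1 : ν (μ (t' : V)) = ν w := congrArg Subtype.val het'
      have h2 : μ (t' : V) = w := hνinj (hmap t' t'.2).2.2 (hWNI hw) h1
      have hwJ : w ∈ J := h2 ▸ (hmap t' t'.2).2.1
      obtain ⟨s, hs, hadj⟩ := hw.1
      exact hSNJ s hs ⟨w, hwJ, hadj.symm⟩
    exact ⟨⟨hνI, hνnT₀⟩, hνnJ⟩
  have hWS : W.ncard ≤ S.ncard := by
    have h1 : W.ncard = (ν '' W).ncard :=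
      (Set.ncard_image_of_injOn (Set.InjOn.mono hWNI hνinj)).symm
    have h2 : ν '' W ⊆ S := by rintro x ⟨w, hw, rfl⟩; exact hνW w hw
    rw [h1]; exact Set.ncard_le_ncard h2 (Set.toFinite _)
  -- cardinality bookkeeping
  have hJSdisj : Disjoint J S := by
    rw [Set.disjoint_right]; intro x hx; exact hx.2
  have hKcard : K.ncard = J.ncard + S.ncard :=
    Set.ncard_union_eq hJSdisj (Set.toFinite _) (Set.toFinite _)
  have hNK : nbhdSet G K ⊆ nbhdSet G J ∪ W := by
    rw [hK, nbhd_union]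
    rintro x (hx | hx)
    · exact Or.inl hx
    · by_cases h : x ∈ nbhdSet G J
      · exact Or.inl h
      · exact Or.inr ⟨hx, h⟩
  have hNKcard : (nbhdSet G K).ncard ≤ (nbhdSet G J).ncard + W.ncard :=
    le_trans (Set.ncard_le_ncard hNK (Set.toFinite _)) (Set.ncard_union_le _ _)
  -- K is critical
  have hKd : diffSet G J ≤ diffSet G K := by
    unfold diffSet
    rw [hKcard]
    push_cast
    have : ((nbhdSet G K).ncard : ℤ) ≤ (nbhdSet G J).ncard + W.ncard := by exact_mod_cast hNKcard
    have hws : (W.ncard : ℤ) ≤ S.ncard := by exact_mod_cast hWS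
    linarith
  have hKcrit : IsCriticalIndep G K :=
    ⟨hKind, fun K' hK' => le_trans (hJ.2 K' hK') hKd⟩
  -- |K| ≥ |I| : partition computations
  have hIJdisjT : Disjoint (I ∩ J) T₀ := by
    rw [Set.disjoint_left]
    rintro x ⟨hxI, hxJ⟩ ⟨-, u, huJ, hadj⟩
    exact hJ.1 huJ hxJ hadj
  have hIpart : I = (I ∩ J) ∪ T₀ ∪ S := by
    ext x
    constructor
    · intro hx
      by_cases h1 : x ∈ nbhdSet G J
      · exact Or.inl (Or.inr ⟨hx, h1⟩)
      · by_cases h2 : x ∈ J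
        · exact Or.inl (Or.inl ⟨hx, h2⟩)
        · exact Or.inr ⟨⟨hx, h1⟩, h2⟩
    · rintro ((⟨h, -⟩ | ⟨h, -⟩) | h) <;> first | exact h | exact h.1.1
  have hIJT_S : Disjoint ((I ∩ J) ∪ T₀) S := by
    rw [Set.disjoint_left]
    rintro x (⟨-, hxJ⟩ | ⟨-, hxN⟩) hxS
    · exact hxS.2 hxJ
    · exact hxS.1.2 hxN
  have hIcard : I.ncard = (I ∩ J).ncard + T₀.ncard + S.ncard := by
    conv_lhs => rw [hIpart]
    rw [Set.ncard_union_eq hIJT_S (Set.toFinite _) (Set.toFinite _),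
      Set.ncard_union_eq hIJdisjT (Set.toFinite _) (Set.toFinite _)]
  -- J = (I ∩ J) ∪ (J ∩ N(I))
  have hJpart : J = (I ∩ J) ∪ (J ∩ nbhdSet G I) := by
    ext x
    constructor
    · intro hx
      rcases hJNI hx with h | h
      · exact Or.inl ⟨h, hx⟩
      · exact Or.inr ⟨hx, h⟩
    · rintro (⟨-, h⟩ | ⟨h, -⟩) <;> exact h
  have hJdisj : Disjoint (I ∩ J) (J ∩ nbhdSet G I) := by
    rw [Set.disjoint_left]
    rintro x ⟨hxI, -⟩ ⟨-, u, huI, hadj⟩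
    exact hIc.1 huI hxI hadj
  have hJcard : J.ncard = (I ∩ J).ncard + (J ∩ nbhdSet G I).ncard := by
    conv_lhs => rw [hJpart]
    exact Set.ncard_union_eq hJdisj (Set.toFinite _) (Set.toFinite _)
  -- |T₀| ≤ |J ∩ N(I)| via μ
  have hT₀le : T₀.ncard ≤ (J ∩ nbhdSet G I).ncard := by
    have hinj : Set.InjOn μ T₀ := Set.InjOn.mono (fun x hx => hx.2) hμinj
    have himg : μ '' T₀ ⊆ J ∩ nbhdSet G I := by
      rintro x ⟨t, ht, rfl⟩; exact (hmap t ht).2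
    calc T₀.ncard = (μ '' T₀).ncard := (Set.ncard_image_of_injOn hinj).symm
      _ ≤ _ := Set.ncard_le_ncard himg (Set.toFinite _)
  have hKI : I.ncard ≤ K.ncard := by omega
  refine ⟨K, ⟨hKcrit, fun J' hJ' => le_trans (hI.2 J' hJ') hKI⟩, Set.subset_union_left⟩

end Scratch4

namespace Scratch5
open Scratch Scratch2 Scratch3 Scratch4

variable (G : SimpleGraph V)

lemma diadem_diff {I : Set V} (hI : IsCriticalIndep G I) :
    diffSet G (diademSet G) = diffSet G I := by
  have main : ∀ F : Set (Set V), F.Finite → F ⊆ {S : Set V | IsCriticalIndep G S} →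
      F.Nonempty → diffSet G I ≤ diffSet G (⋃₀ F) := by
    intro F hF
    refine Set.Finite.induction_on
      (motive := fun F _ => F ⊆ {S : Set V | IsCriticalIndep G S} → F.Nonempty →
        diffSet G I ≤ diffSet G (⋃₀ F)) F hF (fun _ h => absurd rfl h.ne_empty) ?_
    intro a F' hnotmem hF' ih hsub _
    have ha : IsCriticalIndep G a := hsub (Set.mem_insert a F')
    have had : diffSet G a = diffSet G I := le_antisymm (hI.2 _ ha.1) (ha.2 _ hI.1)
    rw [Set.sUnion_insert]
    rcases Set.eq_empty_or_nonempty F' with rfl | hne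
    · simpa using had.ge
    · have hU := ih (fun x hx => hsub (Set.mem_insert_of_mem a hx)) hne
      have h1 := supermod G a (⋃₀ F')
      have h2 := diff_le_crit G hI (a ∩ ⋃₀ F')
      linarith
  have h1 : diffSet G I ≤ diffSet G (diademSet G) :=
    main _ (Set.toFinite _) (fun x hx => hx) ⟨I, hI⟩
  exact le_antisymm (diff_le_crit G hI _) h1

theorem nucleus_diadem_aux (G : SimpleGraph V) :
    (nucleusSet G).ncard + (diademSet G).ncard ≤ 2 * indepNum G := by
  classical
  obtain ⟨I, hI⟩ := exists_max_crit G
  have hIc := hI.1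
  set Q : Set V := diademSet G with hQdef
  set X : Set V := nucleusSet G with hXdef
  have hIQ : I ⊆ Q := fun x hx => ⟨I, hIc, hx⟩
  have hXI : X ⊆ I := Set.sInter_subset_of_mem hI
  have hdQ : diffSet G Q = diffSet G I := diadem_diff G hIc
  set Z : Set V := Q ∩ nbhdSet G Q with hZdef
  set Y : Set V := Q \ nbhdSet G Q with hYdef
  -- Y is critical independent
  have hYind : IsIndep G Y := drop_indep G Q
  have hYd : diffSet G Y = diffSet G I := by
    have h1 := drop_diff_le G Q
    have h2 := diff_le_crit G hIc Y
    rw [hdQ] at h1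
    exact le_antisymm h2 h1
  have hYcrit : IsCriticalIndep G Y :=
    ⟨hYind, fun K hK => le_trans (hIc.2 K hK) hYd.ge⟩
  -- Y ⊆ I
  have hYI : Y ⊆ I := by
    have hind : IsIndep G (I ∪ Y) := by
      rintro u (hu | hu) v (hv | hv) hadj
      · exact hIc.1 hu hv hadj
      · exact hv.2 ⟨u, hIQ hu, hadj⟩
      · exact hu.2 ⟨v, hIQ hv, hadj.symm⟩
      · exact hYind hu hv hadj
    have hd : diffSet G I ≤ diffSet G (I ∪ Y) := by
      have h1 := supermod G I Y
      have h2 := diff_le_crit G hIc (I ∩ Y)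
      linarith [hYd.ge]
    exact subset_union_of_ncard_le
      (hI.2 _ ⟨hind, fun K hK => le_trans (hIc.2 K hK) hd⟩)
  -- N(Q) = N(Y) ∪ Z
  have hNYsub : nbhdSet G Y ⊆ nbhdSet G Q \ Z := by
    intro v hv
    obtain ⟨y, hy, hadj⟩ := hv
    refine ⟨nbhd_mono G Set.diff_subset ⟨y, hy, hadj⟩, ?_⟩
    rintro ⟨hvQ, -⟩
    exact hy.2 ⟨v, hvQ, hadj.symm⟩
  have hZsub : Z ⊆ nbhdSet G Q := Set.inter_subset_right
  have hYcard : Y.ncard = Q.ncard - Z.ncard := by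
    rw [hYdef, ← Set.diff_self_inter]
    exact Set.ncard_diff (s := Q ∩ nbhdSet G Q) (t := Q) Set.inter_subset_left (Set.toFinite _)
  have hZle : Z.ncard ≤ Q.ncard :=
    Set.ncard_le_ncard Set.inter_subset_left (Set.toFinite _)
  have hZleN : Z.ncard ≤ (nbhdSet G Q).ncard := Set.ncard_le_ncard hZsub (Set.toFinite _)
  have hNYeq : nbhdSet G Y = nbhdSet G Q \ Z := by
    apply Set.eq_of_subset_of_ncard_le hNYsub _ (Set.toFinite _)
    have hdiff : (nbhdSet G Q \ Z).ncard = (nbhdSet G Q).ncard - Z.ncard :=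
      Set.ncard_diff (s := Z) (t := nbhdSet G Q) hZsub (Set.toFinite _)
    have heq : diffSet G Y = diffSet G Q := by rw [hYd, hdQ]
    unfold diffSet at heq
    rw [hYcard] at heq
    omega
  -- key subset: N(Q) \ N(I) ⊆ I \ X
  have hkey : nbhdSet G Q \ nbhdSet G I ⊆ I \ X := by
    rintro v ⟨hvQ, hvI⟩
    constructor
    · -- v ∈ I
      have hvY : v ∉ nbhdSet G Y := fun h => hvI (nbhd_mono G hYI h)
      have hvZ : v ∈ Z := by
        by_contra h
        rw [hNYeq] at hvY
        exact hvY ⟨hvQ, h⟩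
      obtain ⟨J, hJ, hvJ⟩ := hvZ.1
      rcases crit_subset_closed_nbhd G hI hJ hvJ with h | h
      · exact h
      · exact absurd h hvI
    · -- v ∉ X
      intro hvX
      obtain ⟨u, hu, hadj⟩ := hvQ
      obtain ⟨J, hJ, huJ⟩ := hu
      obtain ⟨K, hK, hJK⟩ := crit_extends G hI hJ
      have hvK : v ∈ K := hvX K hK
      exact hK.1.1 (hJK huJ) hvK hadj
  -- cardinality count: |X| + |Q| ≤ 2 |I|
  have hNIQ : nbhdSet G I ⊆ nbhdSet G Q := nbhd_mono G hIQ
  have hc1 : (nbhdSet G Q \ nbhdSet G I).ncard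
      = (nbhdSet G Q).ncard - (nbhdSet G I).ncard :=
    Set.ncard_diff (s := nbhdSet G I) (t := nbhdSet G Q) hNIQ (Set.toFinite _)
  have hc2 : (nbhdSet G I).ncard ≤ (nbhdSet G Q).ncard :=
    Set.ncard_le_ncard hNIQ (Set.toFinite _)
  have hc3 : (nbhdSet G Q \ nbhdSet G I).ncard ≤ (I \ X).ncard :=
    Set.ncard_le_ncard hkey (Set.toFinite _)
  have hc4 : (I \ X).ncard = I.ncard - X.ncard :=
    Set.ncard_diff (s := X) (t := I) hXI (Set.toFinite _)
  have hc5 : X.ncard ≤ I.ncard := Set.ncard_le_ncard hXI (Set.toFinite _)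
  have hc6 : (Q.ncard : ℤ) - (nbhdSet G Q).ncard = (I.ncard : ℤ) - (nbhdSet G I).ncard := hdQ
  have hcount : X.ncard + Q.ncard ≤ 2 * I.ncard := by omega
  -- |I| ≤ indepNum
  have halpha : I.ncard ≤ indepNum G := by
    apply le_csSup
    · refine ⟨Fintype.card V, ?_⟩
      rintro n ⟨S, -, rfl⟩
      calc S.ncard ≤ (Set.univ : Set V).ncard :=
            Set.ncard_le_ncard (Set.subset_univ S) (Set.toFinite _)
        _ = Fintype.card V := by rw [Set.ncard_univ, Nat.card_eq_fintype_card]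
    · exact ⟨I, hIc.1, rfl⟩
  omega

end Scratch5


/-- For every finite simple graph `G`,
`|nucleus(G)| + |diadem(G)| ≤ 2·α(G)`. -/
theorem nucleus_diadem_le_two_alpha (G : SimpleGraph V) :
    (nucleusSet G).ncard + (diademSet G).ncard ≤ 2 * indepNum G :=
  Scratch5.nucleus_diadem_aux G
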